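/- Let Γ be a tropical curve with a fixed model G = (V,E), let D be a divisor of nonnegative rank, and let P ∈ Γ. Let X be the set of points of the support of the P-reduced divisor D_P that lie in the interior of an edge of G. Then Γ∖X has at most two connected components; and if P ∉ X, then Γ∖X is connected. (Consequently the image of the reduced-divisor map lies in the 1-skeleton of the cell complex |D|.) -/

import Mathlib

open scoped Classical

/-- A combinatorial model of a metric graph: a finite multigraph with positive
edge lengths. -/
structure GraphModel where
  V : Type
  E : Type
  [fintV : Fintype V]
  [fintE : Fintype E]
  src : E → V
  tgt : E → V
  len : E → ℝ
  len_pos : ∀ e, 0 < len e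

attribute [instance] GraphModel.fintV GraphModel.fintE

/-- A (compact, connected) tropical curve: a compact connected metric space `Γ`
which is the geometric realization of a finite multigraph with positive edge
lengths, equipped with the induced path metric.  Each edge `e` is realized by a
parametrization `edge e : [0, len e] → Γ` joining its endpoints, injective on the
interior, the interiors of distinct edges are disjoint and avoid the vertices,
the edges and vertices cover `Γ`, and the metric is the associated path metric. -/
structure TropicalCurve where
  Γ : Type
  [met : MetricSpace Γ]
  [cpt : CompactSpace Γ]
  [conn : ConnectedSpace Γ]
  G : GraphModel
  vtx : G.V → Γ
  edge : G.E → ℝ → Γ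
  vtx_inj : Function.Injective vtx
  edge_src : ∀ e, edge e 0 = vtx (G.src e)
  edge_tgt : ∀ e, edge e (G.len e) = vtx (G.tgt e)
  edge_inj : ∀ e, Set.InjOn (edge e) (Set.Ioo 0 (G.len e))
  interior_disjoint : ∀ e e' t t', t ∈ Set.Ioo 0 (G.len e) → t' ∈ Set.Ioo 0 (G.len e') →
    edge e t = edge e' t' → e = e' ∧ t = t'
  interior_not_vtx : ∀ e t v, t ∈ Set.Ioo 0 (G.len e) → edge e t ≠ vtx v
  cover : ∀ x : Γ, (∃ v, x = vtx v) ∨ ∃ e t, t ∈ Set.Ioo 0 (G.len e) ∧ x = edge e t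
  path_metric : ∀ x y : Γ, dist x y = sInf { d : ℝ | ∃ (n : ℕ) (p : ℕ → Γ) (δ : ℕ → ℝ),
    p 0 = x ∧ p n = y ∧ (∀ i < n, ∃ (e : G.E) (s t : ℝ), s ∈ Set.Icc 0 (G.len e) ∧
      t ∈ Set.Icc 0 (G.len e) ∧ p i = edge e s ∧ p (i+1) = edge e t ∧ δ i = |s - t|) ∧
    d = ∑ i ∈ Finset.range n, δ i }

attribute [instance] TropicalCurve.met TropicalCurve.cpt TropicalCurve.conn

namespace TropicalCurve

variable (C : TropicalCurve)

/-- A divisor on a tropical curve: a finitely supported function `Γ → ℤ`. -/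
abbrev Divisor := C.Γ →₀ ℤ

/-- A divisor is effective if all its coefficients are nonnegative. -/
def Effective (D : Divisor C) : Prop := ∀ v, 0 ≤ D v

/-- The degree of a divisor: the sum of its coefficients. -/
def deg (D : Divisor C) : ℤ := D.sum fun _ n => n

/-- `f` has (outgoing) slope `m` to the right of the point with parameter `t₀`
on the edge `e`. -/
def HasSlopeR (f : C.Γ → ℝ) (e : C.G.E) (t₀ : ℝ) (m : ℤ) : Prop :=
  ∃ ε > 0, t₀ + ε ≤ C.G.len e ∧ ∀ s ∈ Set.Icc t₀ (t₀ + ε),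
    f (C.edge e s) = f (C.edge e t₀) + m * (s - t₀)

/-- `f` has (outgoing) slope `m` to the left of the point with parameter `t₀`
on the edge `e`. -/
def HasSlopeL (f : C.Γ → ℝ) (e : C.G.E) (t₀ : ℝ) (m : ℤ) : Prop :=
  ∃ ε > 0, 0 ≤ t₀ - ε ∧ ∀ s ∈ Set.Icc (t₀ - ε) t₀,
    f (C.edge e s) = f (C.edge e t₀) + m * (t₀ - s)

/-- The branches (outgoing directions) at a point `x` of a tropical curve.  A
branch is encoded by an edge `e`, a parameter `t` with `edge e t = x`, and a
Boolean : `true` for the rightward direction, `false` for the leftward one. -/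
def IsBranchAt (b : C.G.E × ℝ × Bool) (x : C.Γ) : Prop :=
  C.edge b.1 b.2.1 = x ∧ b.2.1 ∈ Set.Icc 0 (C.G.len b.1) ∧
    (if b.2.2 then b.2.1 < C.G.len b.1 else 0 < b.2.1)

/-- `ord_f(x) = n` : the sum of the outgoing slopes of `f` over all branches
emanating from `x` equals `n`. -/
def HasOrderAt (f : C.Γ → ℝ) (x : C.Γ) (n : ℤ) : Prop :=
  ∃ (S : Finset (C.G.E × ℝ × Bool)) (m : C.G.E × ℝ × Bool → ℤ),
    (∀ b, b ∈ S ↔ C.IsBranchAt b x) ∧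
    (∀ b ∈ S, if b.2.2 then C.HasSlopeR f b.1 b.2.1 (m b)
      else C.HasSlopeL f b.1 b.2.1 (m b)) ∧
    n = ∑ b ∈ S, m b

/-- A rational function on a tropical curve: a continuous function which is
piecewise linear with integer slopes and finitely many linear pieces on every
edge. -/
def IsRational (f : C.Γ → ℝ) : Prop :=
  Continuous f ∧ ∀ e : C.G.E, ∃ (n : ℕ) (t : ℕ → ℝ), 0 < n ∧ t 0 = 0 ∧ t n = C.G.len e ∧
    (∀ i < n, t i < t (i+1)) ∧
    ∀ i < n, ∃ (m : ℤ) (b : ℝ), ∀ s ∈ Set.Icc (t i) (t (i+1)),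
      f (C.edge e s) = m * s + b

/-- Two divisors are linearly equivalent if their difference is the divisor of a
rational function: `D - D' = div(f)`. -/
def LinEquiv (D D' : Divisor C) : Prop :=
  ∃ f : C.Γ → ℝ, C.IsRational f ∧ ∀ x, C.HasOrderAt f x (D x - D' x)

/-- `f ∈ R(D)` : `f` is a rational function with `D + div(f) ≥ 0`. -/
def InR (D : Divisor C) (f : C.Γ → ℝ) : Prop :=
  C.IsRational f ∧ ∃ E : Divisor C, C.Effective E ∧ ∀ x, C.HasOrderAt f x (E x - D x)

/-- The branch `b` at `v` leaves the set `X`: some initial punctured segment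
along `b` stays in `Γ ∖ (X ∖ {v})`. -/
def BranchLeaving (X : Set C.Γ) (v : C.Γ) (b : C.G.E × ℝ × Bool) : Prop :=
  C.IsBranchAt b v ∧
    (if b.2.2 then ∃ ε > 0, b.2.1 + ε ≤ C.G.len b.1 ∧
        ∀ s ∈ Set.Ioc b.2.1 (b.2.1 + ε), C.edge b.1 s ∈ X → C.edge b.1 s = v
      else ∃ ε > 0, 0 ≤ b.2.1 - ε ∧
        ∀ s ∈ Set.Ico (b.2.1 - ε) b.2.1, C.edge b.1 s ∈ X → C.edge b.1 s = v)

/-- `deg_X^out(v)` : the number of edges (branch directions) leaving `X` at `v`,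
i.e. the maximal number of internally disjoint segments in `Γ ∖ (X ∖ {v})` with
an end at `v`. -/
noncomputable def outDeg (X : Set C.Γ) (v : C.Γ) : ℕ :=
  {b | C.BranchLeaving X v b}.ncard

/-- The degree (valence) of a point: the number of branches of `Γ` at `v`. -/
noncomputable def pointDeg (v : C.Γ) : ℕ := C.outDeg {v} v

/-- `D` is `v₀`-reduced: its coefficients away from `v₀` are nonnegative, and
every closed connected subset `X ⊆ Γ` avoiding `v₀` has a non-saturated boundary
point, i.e. some `v ∈ ∂X` with `D(v) < deg_X^out(v)`. -/
def IsReduced (v₀ : C.Γ) (D : Divisor C) : Prop :=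
  (∀ v, v ≠ v₀ → 0 ≤ D v) ∧
  ∀ X : Set C.Γ, IsClosed X → IsConnected X → v₀ ∉ X →
    ∃ v ∈ frontier X, D v < (C.outDeg X v : ℤ)

/-- `D` is linearly equivalent to an effective divisor. -/
def EquivEffective (D : Divisor C) : Prop :=
  ∃ E : Divisor C, C.Effective E ∧ C.LinEquiv D E

/-- The rank of a divisor: the largest `r ≥ -1` such that for every effective
divisor `E` of degree `r`, `D - E` is linearly equivalent to an effective
divisor (`-1` when `D` itself is not equivalent to an effective divisor). -/
noncomputable def rank (D : Divisor C) : ℤ :=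
  sSup {r : ℤ | -1 ≤ r ∧ ∀ E : Divisor C, C.Effective E → C.deg E = r →
    C.EquivEffective (D - E)}

/-- The genus of a tropical curve: its first Betti number, computed from any
model as `#E - #V + 1`. -/
noncomputable def genus : ℤ :=
  (Fintype.card C.G.E : ℤ) - (Fintype.card C.G.V : ℤ) + 1

/-- `D` is very ample: the rational functions in `R(D)` separate the points
of `Γ`. -/
def VeryAmple (D : Divisor C) : Prop :=
  ∀ P Q : C.Γ, P ≠ Q → ∃ f g : C.Γ → ℝ, C.InR D f ∧ C.InR D g ∧ f P - g P ≠ f Q - g Q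

/-- `D` is ample: some positive integer multiple of `D` is very ample. -/
def Ample (D : Divisor C) : Prop := ∃ m : ℕ, 0 < m ∧ C.VeryAmple (m • D)

end TropicalCurve

/-- The set of points of the support of a divisor which lie in the interior of
an edge of the (fixed) model of `Γ`. -/
def TropicalCurve.interiorSupport (C : TropicalCurve) (E : TropicalCurve.Divisor C) :
    Set C.Γ :=
  {x | E x ≠ 0 ∧ ∃ (e : C.G.E) (t : ℝ), t ∈ Set.Ioo 0 (C.G.len e) ∧ x = C.edge e t}

namespace TropicalCurve

open Set

variable (C : TropicalCurve)

/-- The edge parametrizations are 1-Lipschitz. -/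
lemma dist_edge_le (e : C.G.E) {s t : ℝ} (hs : s ∈ Set.Icc 0 (C.G.len e))
    (ht : t ∈ Set.Icc 0 (C.G.len e)) :
    dist (C.edge e s) (C.edge e t) ≤ |s - t| := by
  rw [C.path_metric]
  apply csInf_le
  · refine ⟨0, fun d hd => ?_⟩
    obtain ⟨n, p, δ, -, -, hstep, rfl⟩ := hd
    refine Finset.sum_nonneg fun i hi => ?_
    obtain ⟨e', a, b, -, -, -, -, hδ⟩ := hstep i (Finset.mem_range.1 hi)
    rw [hδ]; positivity
  · refine ⟨1, (fun i => if i = 0 then C.edge e s else C.edge e t), fun _ => |s - t|,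
      by simp, by simp, fun i hi => ?_, by simp⟩
    interval_cases i
    exact ⟨e, s, t, hs, ht, by simp, by simp, rfl⟩

lemma edge_continuousOn (e : C.G.E) :
    ContinuousOn (C.edge e) (Set.Icc 0 (C.G.len e)) := by
  refine (LipschitzOnWith.of_dist_le_mul (K := 1) fun x hx y hy => ?_).continuousOn
  simpa [Real.dist_eq] using C.dist_edge_le e hx hy

/-- Extraction of a short path from a distance bound. -/
lemma exists_path_of_dist_lt {x y : C.Γ} {r : ℝ} (hxy : x ≠ y) (hd : dist x y < r) :
    ∃ (n : ℕ) (p : ℕ → C.Γ) (δ : ℕ → ℝ), p 0 = x ∧ p n = y ∧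
      (∀ i < n, ∃ (e : C.G.E) (s t : ℝ), s ∈ Set.Icc 0 (C.G.len e) ∧
        t ∈ Set.Icc 0 (C.G.len e) ∧ p i = C.edge e s ∧ p (i+1) = C.edge e t ∧
        δ i = |s - t|) ∧
      ∑ i ∈ Finset.range n, δ i < r := by
  set S : Set ℝ := { d : ℝ | ∃ (n : ℕ) (p : ℕ → C.Γ) (δ : ℕ → ℝ),
    p 0 = x ∧ p n = y ∧ (∀ i < n, ∃ (e : C.G.E) (s t : ℝ), s ∈ Set.Icc 0 (C.G.len e) ∧
      t ∈ Set.Icc 0 (C.G.len e) ∧ p i = C.edge e s ∧ p (i+1) = C.edge e t ∧ δ i = |s - t|) ∧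
    d = ∑ i ∈ Finset.range n, δ i } with hSdef
  have hdist : dist x y = sInf S := C.path_metric x y
  have hbdd : BddBelow S := by
    refine ⟨0, fun d hd => ?_⟩
    obtain ⟨n, p, δ, -, -, hstep, rfl⟩ := hd
    refine Finset.sum_nonneg fun i hi => ?_
    obtain ⟨e', a, b, -, -, -, -, hδ⟩ := hstep i (Finset.mem_range.1 hi)
    rw [hδ]; positivity
  have hne : S.Nonempty := by
    by_contra h
    rw [Set.not_nonempty_iff_eq_empty] at h
    rw [h, Real.sInf_empty] at hdist
    exact hxy (dist_eq_zero.1 hdist)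
  have : sInf S < r := hdist ▸ hd
  obtain ⟨d, hdS, hdr⟩ := (csInf_lt_iff hbdd hne).1 this
  obtain ⟨n, p, δ, h0, hn, hstep, rfl⟩ := hdS
  exact ⟨n, p, δ, h0, hn, hstep, hdr⟩

end TropicalCurve
namespace TropicalCurve

open Set

variable (C : TropicalCurve)

/-- Points at distance `< r` from an interior point of an edge lie on that edge. -/
lemma eq_edge_of_dist_lt {e : C.G.E} {t₀ : ℝ} (ht₀ : t₀ ∈ Set.Ioo 0 (C.G.len e))
    {x : C.Γ} {r : ℝ} (hr : r ≤ min t₀ (C.G.len e - t₀))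
    (hd : dist x (C.edge e t₀) < r) :
    ∃ s : ℝ, |s - t₀| < r ∧ x = C.edge e s := by
  have hrt : r ≤ t₀ := hr.trans (min_le_left _ _)
  have hrl : r ≤ C.G.len e - t₀ := hr.trans (min_le_right _ _)
  by_cases hxy : x = C.edge e t₀
  · exact ⟨t₀, by simpa using lt_of_le_of_lt dist_nonneg hd, hxy⟩
  obtain ⟨n, p, δ, hp0, hpn, hstep, hsum⟩ := C.exists_path_of_dist_lt hxy hd
  have hδ : ∀ i < n, 0 ≤ δ i := by
    intro i hi
    obtain ⟨e', a, b, -, -, -, -, hδi⟩ := hstep i hi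
    rw [hδi]; positivity
  have tail_le : ∀ k, ∑ i ∈ Finset.Ico k n, δ i ≤ ∑ i ∈ Finset.range n, δ i := by
    intro k
    rw [Finset.range_eq_Ico]
    refine Finset.sum_le_sum_of_subset_of_nonneg (Finset.Ico_subset_Ico (Nat.zero_le _) le_rfl)
      fun i hi _ => hδ i (Finset.mem_Ico.1 hi).2
  have key : ∀ j, j ≤ n → ∃ s, p (n - j) = C.edge e s ∧
      |s - t₀| ≤ ∑ i ∈ Finset.Ico (n - j) n, δ i := by
    intro j
    induction j with
    | zero => exact fun _ => ⟨t₀, by simpa using hpn, by simp⟩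
    | succ j ih =>
      intro hj
      obtain ⟨s', hps', hs'⟩ := ih (by omega)
      set k := n - (j + 1) with hkdef
      have hk : k < n := by omega
      have hk1 : n - j = k + 1 := by omega
      rw [hk1] at hps' hs'
      have hs'r : |s' - t₀| < r :=
        lt_of_le_of_lt (hs'.trans (tail_le _)) hsum
      have habs := abs_lt.1 hs'r
      have hs'mem : s' ∈ Set.Ioo 0 (C.G.len e) := ⟨by linarith, by linarith⟩
      obtain ⟨e', a, b, ha, hb, hpk, hpk1, hδk⟩ := hstep k hk
      have heq : C.edge e' b = C.edge e s' := by rw [← hpk1, hps']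
      have hb' : b ∈ Set.Ioo 0 (C.G.len e') := by
        rcases eq_or_lt_of_le hb.1 with h | h
        · exact absurd ((C.edge_src e' ▸ (h ▸ heq : C.edge e' 0 = C.edge e s')).symm)
            (C.interior_not_vtx e s' _ hs'mem)
        rcases eq_or_lt_of_le hb.2 with h' | h'
        · exact absurd ((C.edge_tgt e' ▸ (h' ▸ heq : C.edge e' (C.G.len e') = C.edge e s')).symm)
            (C.interior_not_vtx e s' _ hs'mem)
        exact ⟨h, h'⟩
      obtain ⟨rfl, rfl⟩ := C.interior_disjoint e' e b s' hb' hs'mem heq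
      refine ⟨a, hpk, ?_⟩
      rw [Finset.sum_eq_sum_Ico_succ_bot hk]
      have : |a - t₀| ≤ |a - b| + |b - t₀| := by
        have := abs_sub_le a b t₀
        linarith
      rw [hδk]
      linarith
  obtain ⟨s, hps, hs⟩ := key n le_rfl
  simp only [Nat.sub_self] at hps hs
  rw [← Finset.range_eq_Ico] at hs
  exact ⟨s, lt_of_le_of_lt hs hsum, by rw [← hp0, hps]⟩

end TropicalCurve
namespace TropicalCurve

open Set

variable (C : TropicalCurve)

/-- Points at distance `< r` from a vertex lie on an edge incident to it,
close to the corresponding endpoint. -/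
lemma near_vtx {w : C.G.V} {r : ℝ} (hr : ∀ e, r ≤ C.G.len e) {x : C.Γ}
    (hd : dist x (C.vtx w) < r) :
    x = C.vtx w ∨ ∃ (e : C.G.E) (s b₀ : ℝ), (b₀ = 0 ∨ b₀ = C.G.len e) ∧
      C.edge e b₀ = C.vtx w ∧ s ∈ Set.Ioo 0 (C.G.len e) ∧ |s - b₀| < r ∧
      x = C.edge e s := by
  by_cases hxy : x = C.vtx w
  · exact Or.inl hxy
  obtain ⟨n, p, δ, hp0, hpn, hstep, hsum⟩ := C.exists_path_of_dist_lt hxy hd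
  have hδ : ∀ i < n, 0 ≤ δ i := by
    intro i hi
    obtain ⟨e', a, b, -, -, -, -, hδi⟩ := hstep i hi
    rw [hδi]; positivity
  have tail_le : ∀ k, ∑ i ∈ Finset.Ico k n, δ i ≤ ∑ i ∈ Finset.range n, δ i := by
    intro k
    rw [Finset.range_eq_Ico]
    refine Finset.sum_le_sum_of_subset_of_nonneg (Finset.Ico_subset_Ico (Nat.zero_le _) le_rfl)
      fun i hi _ => hδ i (Finset.mem_Ico.1 hi).2
  have key : ∀ j, j ≤ n → p (n - j) = C.vtx w ∨
      ∃ (e : C.G.E) (s b₀ : ℝ), (b₀ = 0 ∨ b₀ = C.G.len e) ∧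
        C.edge e b₀ = C.vtx w ∧ s ∈ Set.Ioo 0 (C.G.len e) ∧
        |s - b₀| ≤ ∑ i ∈ Finset.Ico (n - j) n, δ i ∧ p (n - j) = C.edge e s := by
    intro j
    induction j with
    | zero => exact fun _ => Or.inl (by simpa using hpn)
    | succ j ih =>
      intro hj
      set k := n - (j + 1) with hkdef
      have hk : k < n := by omega
      have hk1 : n - j = k + 1 := by omega
      have tailk : δ k + ∑ i ∈ Finset.Ico (k+1) n, δ i = ∑ i ∈ Finset.Ico k n, δ i :=
        (Finset.sum_eq_sum_Ico_succ_bot hk δ).symm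
      have tailr : ∑ i ∈ Finset.Ico k n, δ i < r := lt_of_le_of_lt (tail_le _) hsum
      have tailr1 : ∑ i ∈ Finset.Ico (k+1) n, δ i < r := by
        have := hδ k hk; linarith [lt_of_le_of_lt (tail_le (k+1)) hsum]
      obtain ⟨e', a, b, ha, hb, hpk, hpk1, hδk⟩ := hstep k hk
      have hδknn : 0 ≤ δ k := hδ k hk
      rcases ih (by omega) with hv | ⟨e, s, b₀, hb₀, hb₀v, hsI, hsb, hps⟩
      · -- p (k+1) is the vertex
        rw [hk1] at hv
        have heq : C.edge e' b = C.vtx w := by rw [← hpk1, hv]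
        have hbend : b = 0 ∨ b = C.G.len e' := by
          rcases eq_or_lt_of_le hb.1 with h | h
          · exact Or.inl h.symm
          rcases eq_or_lt_of_le hb.2 with h' | h'
          · exact Or.inr h'
          exact absurd heq (C.interior_not_vtx e' b w ⟨h, h'⟩)
        by_cases hab : a = b
        · exact Or.inl (by rw [hpk, hab, heq])
        have haio : a ∈ Set.Ioo 0 (C.G.len e') := by
          rcases eq_or_lt_of_le ha.1 with h | h
          · exfalso
            rcases hbend with rfl | rfl
            · exact hab h.symm
            · have h2 : |a - C.G.len e'| = C.G.len e' := by
                rw [← h]; simp [abs_of_nonpos, (C.G.len_pos e').le]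
              rw [← hδk] at h2
              have hnn : (0:ℝ) ≤ ∑ i ∈ Finset.Ico (k+1) n, δ i :=
                Finset.sum_nonneg fun i hi => hδ i (Finset.mem_Ico.1 hi).2
              linarith [tailk, tailr, hr e']
          rcases eq_or_lt_of_le ha.2 with h' | h'
          · exfalso
            rcases hbend with rfl | rfl
            · have h2 : |a - 0| = C.G.len e' := by
                rw [h']; simp [abs_of_nonneg, (C.G.len_pos e').le]
              rw [← hδk] at h2
              have hnn : (0:ℝ) ≤ ∑ i ∈ Finset.Ico (k+1) n, δ i :=
                Finset.sum_nonneg fun i hi => hδ i (Finset.mem_Ico.1 hi).2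
              linarith [tailk, tailr, hr e']
            · exact hab h'
          exact ⟨h, h'⟩
        refine Or.inr ⟨e', a, b, hbend, heq, haio, ?_, hpk⟩
        rw [← tailk, ← hδk]
        have : (0:ℝ) ≤ ∑ i ∈ Finset.Ico (k+1) n, δ i :=
          Finset.sum_nonneg fun i hi => hδ i (Finset.mem_Ico.1 hi).2
        linarith [le_refl (δ k)]
      · -- p (k+1) is an interior point close to the endpoint b₀ of e
        rw [hk1] at hsb hps
        have heq : C.edge e' b = C.edge e s := by rw [← hpk1, hps]
        have hb' : b ∈ Set.Ioo 0 (C.G.len e') := by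
          rcases eq_or_lt_of_le hb.1 with h | h
          · exact absurd ((C.edge_src e' ▸ (h ▸ heq : C.edge e' 0 = C.edge e s)).symm)
              (C.interior_not_vtx e s _ hsI)
          rcases eq_or_lt_of_le hb.2 with h' | h'
          · exact absurd ((C.edge_tgt e' ▸ (h' ▸ heq : C.edge e' (C.G.len e') = C.edge e s)).symm)
              (C.interior_not_vtx e s _ hsI)
          exact ⟨h, h'⟩
        obtain ⟨rfl, rfl⟩ := C.interior_disjoint e' e b s hb' hsI heq
        have hatail : |a - b₀| ≤ ∑ i ∈ Finset.Ico k n, δ i := by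
          have h1 : |a - b₀| ≤ |a - b| + |b - b₀| := by
            have := abs_sub_le a b b₀; linarith
          rw [← tailk]
          linarith
        by_cases haio : a ∈ Set.Ioo 0 (C.G.len e')
        · exact Or.inr ⟨e', a, b₀, hb₀, hb₀v, haio, hatail, hpk⟩
        · -- a is an endpoint; it must equal b₀
          have haend : a = 0 ∨ a = C.G.len e' := by
            rcases eq_or_lt_of_le ha.1 with h | h
            · exact Or.inl h.symm
            rcases eq_or_lt_of_le ha.2 with h' | h'
            · exact Or.inr h'
            exact absurd ⟨h, h'⟩ haio
          have hab₀ : a = b₀ := by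
            rcases haend with rfl | rfl <;> rcases hb₀ with rfl | rfl
            · rfl
            · exfalso
              have : |(0:ℝ) - C.G.len e'| = C.G.len e' := by
                simp [abs_of_nonpos, (C.G.len_pos e').le]
              rw [this] at hatail
              linarith [hr e', tailr]
            · exfalso
              have : |C.G.len e' - 0| = C.G.len e' := by
                simp [abs_of_nonneg, (C.G.len_pos e').le]
              rw [this] at hatail
              linarith [hr e', tailr]
            · rfl
          exact Or.inl (by rw [hpk, hab₀, hb₀v])
  rcases key n le_rfl with hv | ⟨e, s, b₀, hb₀, hb₀v, hsI, hsb, hps⟩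
  · simp only [Nat.sub_self] at hv
    exact Or.inl (by rw [← hp0, hv])
  · simp only [Nat.sub_self] at hsb hps
    rw [← Finset.range_eq_Ico] at hsb
    exact Or.inr ⟨e, s, b₀, hb₀, hb₀v, hsI, lt_of_le_of_lt hsb hsum, by rw [← hp0, hps]⟩

end TropicalCurve
namespace TropicalCurve

open Set

variable (C : TropicalCurve)

/-- Every point has arbitrarily small connected neighborhoods. -/
lemma exists_connected_nhd (z : C.Γ) {ρ : ℝ} (hρ : 0 < ρ) :
    ∃ N : Set C.Γ, IsPreconnected N ∧ N ∈ nhds z ∧ N ⊆ Metric.ball z ρ := by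
  rcases C.cover z with ⟨w, rfl⟩ | ⟨e, t₀, ht₀, rfl⟩
  · -- vertex case
    rcases isEmpty_or_nonempty C.G.E with hE | hE
    · -- no edges: the space is finite, hence discrete
      have hfin : (Set.univ : Set C.Γ).Finite := by
        refine (Set.finite_range C.vtx).subset fun x _ => ?_
        rcases C.cover x with ⟨v, rfl⟩ | ⟨e, _, _, _⟩
        · exact ⟨v, rfl⟩
        · exact hE.elim e
      have hop : IsOpen ({C.vtx w} : Set C.Γ) := by
        have : ({C.vtx w}ᶜ : Set C.Γ).Finite := hfin.subset (Set.subset_univ _)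
        simpa using this.isClosed.isOpen_compl
      exact ⟨{C.vtx w}, isPreconnected_singleton, hop.mem_nhds rfl,
        by intro x hx; rw [Set.mem_singleton_iff] at hx; rw [hx]; exact Metric.mem_ball_self hρ⟩
    · have hne : (Finset.univ : Finset C.G.E).Nonempty := Finset.univ_nonempty
      set m := Finset.univ.inf' hne C.G.len with hm
      have hmpos : 0 < m := by
        rw [hm, Finset.lt_inf'_iff]
        exact fun e _ => C.G.len_pos e
      set r := min ρ m with hrdef
      have hrpos : 0 < r := lt_min hρ hmpos
      have hrle : ∀ e, r / 2 ≤ C.G.len e := fun e => by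
        have : m ≤ C.G.len e := Finset.inf'_le _ (Finset.mem_univ e)
        have : r ≤ C.G.len e := le_trans (min_le_right _ _) this
        linarith
      set 𝒞 : Set (Set C.Γ) := insert {C.vtx w}
        {S | ∃ (e : C.G.E) (b₀ : ℝ), (b₀ = 0 ∨ b₀ = C.G.len e) ∧ C.edge e b₀ = C.vtx w ∧
          S = C.edge e '' (Set.Icc (b₀ - r/2) (b₀ + r/2) ∩ Set.Icc 0 (C.G.len e))} with h𝒞
      have hmem : ∀ S ∈ 𝒞, C.vtx w ∈ S := by
        rintro S (rfl | ⟨e, b₀, hb₀, hb₀v, rfl⟩)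
        · exact rfl
        · refine ⟨b₀, ⟨⟨by linarith, by linarith⟩, ?_⟩, hb₀v⟩
          rcases hb₀ with rfl | rfl
          · exact ⟨le_rfl, (C.G.len_pos e).le⟩
          · exact ⟨(C.G.len_pos e).le, le_rfl⟩
      have hconn : ∀ S ∈ 𝒞, IsPreconnected S := by
        rintro S (rfl | ⟨e, b₀, hb₀, hb₀v, rfl⟩)
        · exact isPreconnected_singleton
        · rw [Set.Icc_inter_Icc]
          exact isPreconnected_Icc.image _
            ((C.edge_continuousOn e).mono (by rw [← Set.Icc_inter_Icc]; exact Set.inter_subset_right))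
      refine ⟨⋃₀ 𝒞, isPreconnected_sUnion (C.vtx w) 𝒞 hmem hconn, ?_, ?_⟩
      · refine Filter.mem_of_superset (Metric.ball_mem_nhds _ (by positivity : (0:ℝ) < r/2)) ?_
        intro x hx
        rcases C.near_vtx (w := w) hrle (Metric.mem_ball.1 hx) with rfl | ⟨e, s, b₀, hb₀, hb₀v, hsI, hsb, rfl⟩
        · exact ⟨{C.vtx w}, Set.mem_insert _ _, rfl⟩
        · refine ⟨C.edge e '' (Set.Icc (b₀ - r/2) (b₀ + r/2) ∩ Set.Icc 0 (C.G.len e)),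
            Set.mem_insert_of_mem _ ⟨e, b₀, hb₀, hb₀v, rfl⟩, ⟨s, ⟨?_, ⟨hsI.1.le, hsI.2.le⟩⟩, rfl⟩⟩
          have := abs_lt.1 hsb
          exact ⟨by linarith, by linarith⟩
      · rintro x ⟨S, hS, hxS⟩
        rcases hS with rfl | ⟨e, b₀, hb₀, hb₀v, rfl⟩
        · rw [Set.mem_singleton_iff] at hxS
          rw [hxS]
          exact Metric.mem_ball_self hρ
        · obtain ⟨s, ⟨hs1, hs2⟩, rfl⟩ := hxS
          rw [Metric.mem_ball, ← hb₀v]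
          have hb₀icc : b₀ ∈ Set.Icc 0 (C.G.len e) := by
            rcases hb₀ with rfl | rfl
            · exact ⟨le_rfl, (C.G.len_pos e).le⟩
            · exact ⟨(C.G.len_pos e).le, le_rfl⟩
          refine lt_of_le_of_lt (C.dist_edge_le e hs2 hb₀icc) ?_
          have : |s - b₀| ≤ r/2 := abs_le.2 ⟨by linarith [hs1.1], by linarith [hs1.2]⟩
          have hrρ : r ≤ ρ := min_le_left _ _
          linarith
  · -- interior point case
    set r := min ρ (min t₀ (C.G.len e - t₀)) with hrdef
    have hrpos : 0 < r := lt_min hρ (lt_min ht₀.1 (by linarith [ht₀.2]))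
    have hrt : r ≤ t₀ := le_trans (min_le_right _ _) (min_le_left _ _)
    have hrl : r ≤ C.G.len e - t₀ := le_trans (min_le_right _ _) (min_le_right _ _)
    refine ⟨C.edge e '' Set.Icc (t₀ - r/2) (t₀ + r/2), ?_, ?_, ?_⟩
    · refine isPreconnected_Icc.image _ ((C.edge_continuousOn e).mono ?_)
      intro s hs
      exact ⟨by linarith [hs.1], by linarith [hs.2]⟩
    · refine Filter.mem_of_superset (Metric.ball_mem_nhds _ (by positivity : (0:ℝ) < r/2)) ?_
      intro x hx
      obtain ⟨s, hsd, rfl⟩ := C.eq_edge_of_dist_lt ht₀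
        (by rw [le_min_iff]; constructor <;> linarith : r/2 ≤ min t₀ (C.G.len e - t₀))
        (Metric.mem_ball.1 hx)
      have := abs_lt.1 hsd
      exact ⟨s, ⟨by linarith, by linarith⟩, rfl⟩
    · rintro x ⟨s, hs, rfl⟩
      rw [Metric.mem_ball]
      refine lt_of_le_of_lt (C.dist_edge_le e ⟨by linarith [hs.1], by linarith [hs.2]⟩
        ⟨ht₀.1.le, ht₀.2.le⟩) ?_
      have : |s - t₀| ≤ r/2 := abs_le.2 ⟨by linarith [hs.1], by linarith [hs.2]⟩
      have hrρ : r ≤ ρ := min_le_left _ _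
      linarith

end TropicalCurve
namespace TropicalCurve

open Set

variable (C : TropicalCurve)

lemma componentIn_open {U : Set C.Γ} (hU : IsOpen U) (y : C.Γ) :
    IsOpen (connectedComponentIn U y) := by
  rw [isOpen_iff_mem_nhds]
  intro u hu
  have huU : u ∈ U := connectedComponentIn_subset _ _ hu
  obtain ⟨ρ, hρ, hball⟩ := Metric.isOpen_iff.1 hU u huU
  obtain ⟨N, hNc, hNn, hNb⟩ := C.exists_connected_nhd u hρ
  have hsub : N ⊆ connectedComponentIn U u :=
    hNc.subset_connectedComponentIn (mem_of_mem_nhds hNn) (hNb.trans hball)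
  rw [connectedComponentIn_eq hu]
  exact Filter.mem_of_superset hNn hsub

lemma mem_componentIn_of_mem_closure {U : Set C.Γ} (hU : IsOpen U) {y z : C.Γ}
    (hz : z ∈ closure (connectedComponentIn U y)) (hzU : z ∈ U) :
    z ∈ connectedComponentIn U y := by
  obtain ⟨ρ, hρ, hball⟩ := Metric.isOpen_iff.1 hU z hzU
  obtain ⟨N, hNc, hNn, hNb⟩ := C.exists_connected_nhd z hρ
  obtain ⟨u, huN, huY⟩ := mem_closure_iff_nhds.1 hz N hNn
  have h1 : N ⊆ connectedComponentIn U u :=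
    hNc.subset_connectedComponentIn huN (hNb.trans hball)
  rw [connectedComponentIn_eq huY]
  exact h1 (mem_of_mem_nhds hNn)

lemma interiorSupport_finite (DP : Divisor C) : (C.interiorSupport DP).Finite := by
  refine DP.support.finite_toSet.subset fun x hx => ?_
  exact Finsupp.mem_support_iff.2 hx.1

/-- The key lemma: the base point lies in the closure of every connected
component of the complement of the interior support of a reduced divisor. -/
lemma P_mem_closure (DP : Divisor C) (P : C.Γ) (h₁ : C.IsReduced P DP)
    {y : C.Γ} (hy : y ∈ (C.interiorSupport DP)ᶜ) :
    P ∈ closure (connectedComponentIn (C.interiorSupport DP)ᶜ y) := by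
  set X := C.interiorSupport DP with hXdef
  have hXfin : X.Finite := C.interiorSupport_finite DP
  have hUopen : IsOpen Xᶜ := hXfin.isClosed.isOpen_compl
  set Y := connectedComponentIn Xᶜ y with hYdef
  by_contra hP
  have hYne : Y.Nonempty := ⟨y, mem_connectedComponentIn hy⟩
  have hYconn : IsConnected Y := isConnected_connectedComponentIn_iff.2 hy
  have hCc : IsConnected (closure Y) :=
    ⟨hYne.mono subset_closure, hYconn.isPreconnected.closure⟩
  obtain ⟨v, hvf, hvlt⟩ := h₁.2 (closure Y) isClosed_closure hCc hP
  rw [frontier, closure_closure] at hvf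
  have hvcl : v ∈ closure Y := hvf.1
  have hYopen : IsOpen Y := C.componentIn_open hUopen y
  have hvY : v ∉ Y := fun h =>
    hvf.2 ((hYopen.subset_interior_iff.2 subset_closure) h)
  have hvX : v ∈ X := by
    by_contra hvX
    exact hvY (C.mem_componentIn_of_mem_closure hUopen hvcl hvX)
  obtain ⟨hDPv, e, t₀, ht₀, hveq⟩ := hvX
  subst hveq
  have hvP : C.edge e t₀ ≠ P := fun h => hP (h ▸ hvcl)
  have hDP1 : 1 ≤ DP (C.edge e t₀) := by
    have := h₁.1 _ hvP
    omega
  have h2le : 2 ≤ C.outDeg (closure Y) (C.edge e t₀) := by omega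
  set B := {b | C.BranchLeaving (closure Y) (C.edge e t₀) b} with hBdef
  have hBsub : B ⊆ {(e, t₀, true), (e, t₀, false)} := by
    rintro ⟨be, bt, bb⟩ ⟨⟨hbe, hbicc, hbcond⟩, -⟩
    dsimp only at hbe hbicc hbcond
    by_cases hbio : bt ∈ Set.Ioo 0 (C.G.len be)
    · obtain ⟨rfl, rfl⟩ := C.interior_disjoint be e bt t₀ hbio ht₀ hbe
      cases bb
      · exact Or.inr rfl
      · exact Or.inl rfl
    · exfalso
      have hbend : bt = 0 ∨ bt = C.G.len be := by
        rcases eq_or_lt_of_le hbicc.1 with h | h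
        · exact Or.inl h.symm
        rcases eq_or_lt_of_le hbicc.2 with h' | h'
        · exact Or.inr h'
        exact absurd ⟨h, h'⟩ hbio
      rcases hbend with rfl | rfl
      · rw [C.edge_src be] at hbe
        exact C.interior_not_vtx e t₀ _ ht₀ hbe.symm
      · rw [C.edge_tgt be] at hbe
        exact C.interior_not_vtx e t₀ _ ht₀ hbe.symm
  have hBeq : B = {(e, t₀, true), (e, t₀, false)} := by
    refine Set.eq_of_subset_of_ncard_le hBsub ?_ (Set.toFinite _)
    rw [Set.ncard_pair (by simp : ((e, t₀, true) : C.G.E × ℝ × Bool) ≠ (e, t₀, false))]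
    exact h2le
  have hRmem : C.BranchLeaving (closure Y) (C.edge e t₀) (e, t₀, true) := by
    have : (e, t₀, true) ∈ B := hBeq ▸ Set.mem_insert _ _
    exact this
  have hLmem : C.BranchLeaving (closure Y) (C.edge e t₀) (e, t₀, false) := by
    have : (e, t₀, false) ∈ B := hBeq ▸ Set.mem_insert_of_mem _ rfl
    exact this
  obtain ⟨-, hR⟩ := hRmem
  obtain ⟨-, hL⟩ := hLmem
  simp only [if_true, if_false] at hR hL
  obtain ⟨ε₁, hε₁, hε₁len, hright⟩ := hR
  obtain ⟨ε₂, hε₂, hε₂0, hleft⟩ := hL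
  set r := min (min ε₁ ε₂) (min t₀ (C.G.len e - t₀)) with hrdef
  have hrpos : 0 < r := lt_min (lt_min hε₁ hε₂) (lt_min ht₀.1 (by linarith [ht₀.2]))
  obtain ⟨u, huball, huY⟩ := mem_closure_iff_nhds.1 hvcl
    (Metric.ball (C.edge e t₀) r) (Metric.ball_mem_nhds _ hrpos)
  obtain ⟨s, hsd, hueq⟩ := C.eq_edge_of_dist_lt ht₀ (min_le_right _ _)
    (Metric.mem_ball.1 huball)
  have habs := abs_lt.1 hsd
  have hrε₁ : r ≤ ε₁ := le_trans (min_le_left _ _) (min_le_left _ _)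
  have hrε₂ : r ≤ ε₂ := le_trans (min_le_left _ _) (min_le_right _ _)
  have huv : u ≠ C.edge e t₀ := fun h => hvY (h ▸ huY)
  have hst : s ≠ t₀ := fun h => huv (by rw [hueq, h])
  rcases hst.lt_or_gt with h | h
  · have : C.edge e s = C.edge e t₀ :=
      hleft s ⟨by linarith, h⟩ (hueq ▸ subset_closure huY)
    exact huv (hueq.trans this)
  · have : C.edge e s = C.edge e t₀ :=
      hright s ⟨h, by linarith⟩ (hueq ▸ subset_closure huY)
    exact huv (hueq.trans this)

end TropicalCurve
/-- Let `Γ` be a tropical curve with a fixed model `G = (V,E)`,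
let `D` be a divisor of nonnegative rank, and let `P ∈ Γ`. Let `X` be the set of
points of the support of the `P`-reduced divisor `D_P` that lie in the interior
of an edge of `G`. Then `Γ ∖ X` has at most two connected components; and if
`P ∉ X`, then `Γ ∖ X` is connected. -/
theorem complement_of_interior_support_of_reduced (C : TropicalCurve)
    (D : TropicalCurve.Divisor C) (hD : 0 ≤ C.rank D) (P : C.Γ)
    (DP : TropicalCurve.Divisor C) (h₁ : C.IsReduced P DP) (h₂ : C.LinEquiv DP D) :
    (∀ x y z : C.Γ,
      x ∈ (C.interiorSupport DP)ᶜ → y ∈ (C.interiorSupport DP)ᶜ →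
      z ∈ (C.interiorSupport DP)ᶜ →
      (connectedComponentIn (C.interiorSupport DP)ᶜ x =
        connectedComponentIn (C.interiorSupport DP)ᶜ y ∨
       connectedComponentIn (C.interiorSupport DP)ᶜ x =
        connectedComponentIn (C.interiorSupport DP)ᶜ z ∨
       connectedComponentIn (C.interiorSupport DP)ᶜ y =
        connectedComponentIn (C.interiorSupport DP)ᶜ z)) ∧
    (P ∉ C.interiorSupport DP → IsConnected (C.interiorSupport DP)ᶜ) := by
  set X := C.interiorSupport DP with hXdef
  have hXfin : X.Finite := C.interiorSupport_finite DP
  have hUopen : IsOpen Xᶜ := hXfin.isClosed.isOpen_compl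
  -- when `P ∉ X`, every component equals the component of `P`
  have hall : P ∉ X → ∀ y ∈ (Xᶜ : Set C.Γ),
      connectedComponentIn Xᶜ y = connectedComponentIn Xᶜ P := by
    intro hP y hy
    have h1 := C.P_mem_closure DP P h₁ hy
    have h2 : P ∈ connectedComponentIn Xᶜ y :=
      C.mem_componentIn_of_mem_closure hUopen h1 hP
    exact connectedComponentIn_eq h2
  constructor
  · intro x y z hx hy hz
    by_cases hP : P ∈ X
    · -- `P` is an interior point of an edge; components cluster on the two sides of `P`
      obtain ⟨hDPP, e₀, t₀, ht₀, hPeq⟩ := hP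
      have hPX : P ∈ X := ⟨hDPP, e₀, t₀, ht₀, hPeq⟩
      set X' : Set C.Γ := X \ {P} with hX'def
      have hX'cl : IsClosed X' := (hXfin.subset Set.diff_subset).isClosed
      have hPX' : P ∈ X'ᶜ := fun h => h.2 rfl
      obtain ⟨ρ, hρ, hball⟩ := Metric.isOpen_iff.1 hX'cl.isOpen_compl P hPX'
      set ε := min (ρ/2) (min t₀ (C.G.len e₀ - t₀) / 2) with hεdef
      have hmin : 0 < min t₀ (C.G.len e₀ - t₀) := lt_min ht₀.1 (by linarith [ht₀.2])
      have hε : 0 < ε := lt_min (by linarith) (by linarith)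
      have hεt : ε ≤ t₀ / 2 := le_trans (min_le_right _ _)
        (by have := min_le_left t₀ (C.G.len e₀ - t₀); linarith)
      have hεl : ε ≤ (C.G.len e₀ - t₀) / 2 := le_trans (min_le_right _ _)
        (by have := min_le_right t₀ (C.G.len e₀ - t₀); linarith)
      have hεmin : ε ≤ min t₀ (C.G.len e₀ - t₀) := by
        rw [le_min_iff]; constructor <;> linarith [ht₀.1, ht₀.2]
      have hεtlt : 0 < t₀ - ε := by linarith [ht₀.1]
      -- points of the punctured `ε`-segment around `P` avoid `X`
      have hseg : ∀ s, s ∈ Set.Icc (t₀ - ε) (t₀ + ε) → s ≠ t₀ → C.edge e₀ s ∈ Xᶜ := by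
        intro s hs hst hmem
        have hsIoo : s ∈ Set.Ioo 0 (C.G.len e₀) :=
          ⟨by linarith [hs.1, ht₀.1], by linarith [hs.2, ht₀.2]⟩
        have hne : C.edge e₀ s ≠ P := by
          rw [hPeq]
          intro h
          exact hst (C.edge_inj e₀ hsIoo ht₀ h)
        have hX'mem : C.edge e₀ s ∈ X' := ⟨hmem, hne⟩
        have hd : dist (C.edge e₀ s) P < ρ := by
          rw [hPeq]
          refine lt_of_le_of_lt (C.dist_edge_le e₀ ⟨hsIoo.1.le, hsIoo.2.le⟩
            ⟨ht₀.1.le, ht₀.2.le⟩) ?_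
          have : |s - t₀| ≤ ε := abs_le.2 ⟨by linarith [hs.1], by linarith [hs.2]⟩
          linarith [min_le_left (ρ/2) (min t₀ (C.G.len e₀ - t₀) / 2)]
        exact hball (Metric.mem_ball.2 hd) hX'mem
      -- the two reference points
      have hr₀ : C.edge e₀ (t₀ + ε) ∈ (Xᶜ : Set C.Γ) :=
        hseg _ ⟨by linarith, le_rfl⟩ (by linarith)
      have hl₀ : C.edge e₀ (t₀ - ε) ∈ (Xᶜ : Set C.Γ) :=
        hseg _ ⟨le_rfl, by linarith⟩ (by linarith)
      -- the two side segments
      have hRseg : C.edge e₀ '' Set.Ioc t₀ (t₀ + ε) ⊆ (Xᶜ : Set C.Γ) := by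
        rintro _ ⟨s, hs, rfl⟩
        exact hseg s ⟨by linarith [hs.1], hs.2⟩ (by linarith [hs.1])
      have hLseg : C.edge e₀ '' Set.Ico (t₀ - ε) t₀ ⊆ (Xᶜ : Set C.Γ) := by
        rintro _ ⟨s, hs, rfl⟩
        exact hseg s ⟨hs.1, by linarith [hs.2]⟩ (by linarith [hs.2])
      have hRconn : IsPreconnected (C.edge e₀ '' Set.Ioc t₀ (t₀ + ε)) :=
        isPreconnected_Ioc.image _ ((C.edge_continuousOn e₀).mono
          (fun s hs => ⟨by linarith [hs.1, ht₀.1], by linarith [hs.2, ht₀.2]⟩))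
      have hLconn : IsPreconnected (C.edge e₀ '' Set.Ico (t₀ - ε) t₀) :=
        isPreconnected_Ico.image _ ((C.edge_continuousOn e₀).mono
          (fun s hs => ⟨by linarith [hs.1, ht₀.1], by linarith [hs.2, ht₀.2]⟩))
      have hRsub : C.edge e₀ '' Set.Ioc t₀ (t₀ + ε) ⊆
          connectedComponentIn Xᶜ (C.edge e₀ (t₀ + ε)) :=
        hRconn.subset_connectedComponentIn ⟨t₀ + ε, ⟨by linarith, le_rfl⟩, rfl⟩ hRseg
      have hLsub : C.edge e₀ '' Set.Ico (t₀ - ε) t₀ ⊆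
          connectedComponentIn Xᶜ (C.edge e₀ (t₀ - ε)) :=
        hLconn.subset_connectedComponentIn ⟨t₀ - ε, ⟨le_rfl, by linarith⟩, rfl⟩ hLseg
      -- every component is one of the two
      have hclass : ∀ w ∈ (Xᶜ : Set C.Γ),
          connectedComponentIn Xᶜ w = connectedComponentIn Xᶜ (C.edge e₀ (t₀ + ε)) ∨
          connectedComponentIn Xᶜ w = connectedComponentIn Xᶜ (C.edge e₀ (t₀ - ε)) := by
        intro w hw
        have hcl := C.P_mem_closure DP P h₁ hw
        rw [hPeq] at hcl
        obtain ⟨u, huball, huY⟩ := mem_closure_iff_nhds.1 hcl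
          (Metric.ball (C.edge e₀ t₀) ε) (Metric.ball_mem_nhds _ hε)
        obtain ⟨s, hsd, hueq⟩ := C.eq_edge_of_dist_lt ht₀ hεmin (Metric.mem_ball.1 huball)
        have habs := abs_lt.1 hsd
        have huX : u ∈ (Xᶜ : Set C.Γ) := connectedComponentIn_subset _ _ huY
        have hst : s ≠ t₀ := by
          rintro rfl
          exact huX (by rw [hueq, ← hPeq]; exact hPX)
        rcases hst.lt_or_gt with h | h
        · right
          have huL : u ∈ C.edge e₀ '' Set.Ico (t₀ - ε) t₀ :=
            ⟨s, ⟨by linarith, h⟩, hueq.symm⟩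
          rw [connectedComponentIn_eq huY, connectedComponentIn_eq (hLsub huL)]
        · left
          have huR : u ∈ C.edge e₀ '' Set.Ioc t₀ (t₀ + ε) :=
            ⟨s, ⟨h, by linarith⟩, hueq.symm⟩
          rw [connectedComponentIn_eq huY, connectedComponentIn_eq (hRsub huR)]
      rcases hclass x hx with h1 | h1 <;> rcases hclass y hy with h2 | h2 <;>
        rcases hclass z hz with h3 | h3 <;> simp [h1, h2, h3]
    · left
      rw [hall hP x hx, hall hP y hy]
  · intro hP
    have hPc : P ∈ (Xᶜ : Set C.Γ) := hP
    have hXeq : (Xᶜ : Set C.Γ) = connectedComponentIn Xᶜ P := by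
      refine subset_antisymm (fun y hy => ?_) (connectedComponentIn_subset _ _)
      rw [← hall hP y hy]
      exact mem_connectedComponentIn hy
    rw [hXeq]
    exact isConnected_connectedComponentIn_iff.2 hPc
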